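/- arXiv:2603.06475 — 2 statements merged into one kernel-verified Lean document; each statement's English description precedes it below -/
import Mathlib

section
/- Let d ≥ 2, k ∈ {1,…,d}, and for r > 1 set N(r) = ⌊|log(r-1)|/log d⌋. Then as r → 1⁺: (a) Σ_{n=0}^{N(r)} (1 - r^{-2 k d^n - 2}) = o(|log(r-1)|), and (b) Σ_{n > N(r)} r^{-2 k d^n - 2} is bounded uniformly in r. Consequently, (1/|log(r-1)|) Σ_{n=0}^{∞} r^{-2 k d^n - 2} → 1/log d as r → 1⁺. -/
open Filter

private lemma aux_zpow (r : ℝ) (hr : 0 < r) (k d a : ℕ) :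
    r ^ (-(2 * (k : ℤ) * (d : ℤ) ^ a + 2)) = ((r ^ (2 * k * d ^ a + 2) : ℝ))⁻¹ := by
  rw [show (-(2 * (k : ℤ) * (d : ℤ) ^ a + 2)) = -((2 * k * d ^ a + 2 : ℕ) : ℤ) by push_cast; ring,
    zpow_neg, zpow_natCast]

private lemma natpow_bound (d : ℕ) (hd : 2 ≤ d) (n : ℕ) : n + 1 ≤ d ^ n := by
  calc n + 1 ≤ 2 ^ n := Nat.lt_two_pow_self
    _ ≤ d ^ n := Nat.pow_le_pow_left hd n

private lemma geomsum_le (d : ℕ) (hd : 2 ≤ d) (M : ℕ) :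
    ∑ n ∈ Finset.range M, d ^ n ≤ d ^ M := by
  induction M with
  | zero => simp
  | succ M ih =>
    rw [Finset.sum_range_succ, pow_succ]
    have : d ^ M * 2 ≤ d ^ M * d := Nat.mul_le_mul_left _ hd
    omega

private lemma L_tendsto :
    Tendsto (fun r : ℝ => |Real.log (r - 1)|) (nhdsWithin 1 (Set.Ioi 1)) atTop := by
  have h1 : Tendsto (fun r : ℝ => r - 1) (nhdsWithin 1 (Set.Ioi 1)) (nhdsWithin 0 (Set.Ioi 0)) := by
    apply tendsto_nhdsWithin_of_tendsto_nhds_of_eventually_within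
    · have h0 : Tendsto (fun r : ℝ => r - 1) (nhds 1) (nhds ((1:ℝ) - 1)) :=
        (Continuous.tendsto (by continuity) 1)
      rw [sub_self] at h0
      exact h0.mono_left nhdsWithin_le_nhds
    · filter_upwards [self_mem_nhdsWithin] with r hr
      simpa [Set.mem_Ioi, sub_pos] using hr
  exact tendsto_abs_atBot_atTop.comp (Real.tendsto_log_nhdsGT_zero.comp h1)

private lemma key_ineq (d : ℕ) (hd : 2 ≤ d) (r : ℝ) (hr : 1 < r) :
    1 ≤ (d : ℝ) ^ (⌊|Real.log (r - 1)| / Real.log d⌋₊ + 1) * (r - 1) := by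
  have hd1 : (1:ℝ) < (d:ℝ) := by exact_mod_cast (by omega : 1 < d)
  have hr0 : 0 < r - 1 := sub_pos.2 hr
  rcases le_or_gt 2 r with h2 | h2
  · have h3 : (1:ℝ) ≤ (d:ℝ) ^ (⌊|Real.log (r - 1)| / Real.log d⌋₊ + 1) :=
      one_le_pow₀ hd1.le
    nlinarith
  · set N := ⌊|Real.log (r - 1)| / Real.log d⌋₊ with hN
    have hlogd : 0 < Real.log d := Real.log_pos hd1
    have hfl : |Real.log (r - 1)| / Real.log d < N + 1 := Nat.lt_floor_add_one _
    have h4 : |Real.log (r - 1)| < (N + 1 : ℝ) * Real.log d := by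
      rw [div_lt_iff₀ hlogd] at hfl; exact hfl
    have hlt1 : r - 1 < 1 := by linarith
    have habs : |Real.log (r - 1)| = Real.log ((r - 1)⁻¹) := by
      rw [Real.log_inv, abs_of_neg (Real.log_neg hr0 hlt1)]
    have h5 : Real.log ((r - 1)⁻¹) < Real.log ((d:ℝ) ^ (N + 1)) := by
      rw [Real.log_pow]
      rw [habs] at h4
      push_cast
      linarith
    have h6 : (r - 1)⁻¹ < (d:ℝ) ^ (N + 1) :=
      (Real.log_lt_log_iff (inv_pos.2 hr0) (pow_pos (by linarith) _)).1 h5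
    calc (1:ℝ) = (r - 1)⁻¹ * (r - 1) := (inv_mul_cancel₀ hr0.ne').symm
      _ ≤ (d:ℝ) ^ (N + 1) * (r - 1) := mul_le_mul_of_nonneg_right h6.le hr0.le

private lemma pow_two_le (d : ℕ) (r : ℝ) (hr : 1 < r) (M : ℕ)
    (hM : 1 ≤ (d:ℝ) ^ M * (r - 1)) : (2:ℝ) ≤ r ^ (2 * d ^ M) := by
  have hb := one_add_mul_le_pow (by linarith : (-2:ℝ) ≤ r - 1) (2 * d ^ M)
  have h1 : (1:ℝ) + (r - 1) = r := by ring
  rw [h1] at hb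
  have hc : ((2 * d ^ M : ℕ) : ℝ) * (r - 1) = 2 * ((d:ℝ) ^ M * (r - 1)) := by
    push_cast; ring
  rw [hc] at hb
  nlinarith

private lemma tail_bound (d k : ℕ) (hd : 2 ≤ d) (hk : 1 ≤ k) (r : ℝ) (hr : 1 < r) (M : ℕ)
    (hM : (2:ℝ) ≤ r ^ (2 * d ^ M)) :
    Summable (fun n : ℕ => ((r ^ (2 * k * d ^ (M + n) + 2) : ℝ))⁻¹) ∧
    (∑' n : ℕ, ((r ^ (2 * k * d ^ (M + n) + 2) : ℝ))⁻¹) ≤ 1 := by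
  have hr0 : (0:ℝ) < r := lt_trans one_pos hr
  set x : ℝ := (r ^ (2 * d ^ M))⁻¹ with hx
  have hpp : ∀ m : ℕ, (0:ℝ) < r ^ m := fun m => pow_pos hr0 m
  have hx0 : 0 ≤ x := (inv_pos.2 (hpp _)).le
  have hx2 : x ≤ 1/2 := by
    rw [hx]
    rw [show (1:ℝ)/2 = 2⁻¹ by norm_num]
    exact inv_anti₀ two_pos hM
  have hx1 : x < 1 := lt_of_le_of_lt hx2 (by norm_num)
  have hterm : ∀ n : ℕ, ((r ^ (2 * k * d ^ (M + n) + 2) : ℝ))⁻¹ ≤ x ^ (n + 1) := by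
    intro n
    have hnat : 2 * d ^ M * (n + 1) ≤ 2 * k * d ^ (M + n) + 2 := by
      have h1 : n + 1 ≤ d ^ n := natpow_bound d hd n
      have h2 : 2 * d ^ M * (n + 1) ≤ 2 * d ^ M * d ^ n :=
        Nat.mul_le_mul_left _ h1
      have h3 : 2 * d ^ M * d ^ n = 2 * d ^ (M + n) := by rw [pow_add]; ring
      have h4 : 2 * d ^ (M + n) ≤ 2 * k * d ^ (M + n) := by
        have := Nat.mul_le_mul_right (d ^ (M + n)) (Nat.mul_le_mul_left 2 hk)
        simpa [mul_one] using this
      omega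
    have hpow : r ^ (2 * d ^ M * (n + 1)) ≤ r ^ (2 * k * d ^ (M + n) + 2) :=
      pow_le_pow_right₀ hr.le hnat
    calc ((r ^ (2 * k * d ^ (M + n) + 2) : ℝ))⁻¹
        ≤ (r ^ (2 * d ^ M * (n + 1)))⁻¹ := inv_anti₀ (hpp _) hpow
      _ = x ^ (n + 1) := by rw [hx, ← inv_pow, ← inv_pow, ← pow_mul]
  have hfun : (fun n : ℕ => x ^ (n + 1)) = fun n : ℕ => x * x ^ n := by
    funext n; ring
  have hgeo : Summable (fun n : ℕ => x ^ (n + 1)) := by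
    rw [hfun]; exact (summable_geometric_of_lt_one hx0 hx1).mul_left x
  have hsum : Summable (fun n : ℕ => ((r ^ (2 * k * d ^ (M + n) + 2) : ℝ))⁻¹) :=
    Summable.of_nonneg_of_le (fun n => (inv_pos.2 (hpp _)).le) hterm hgeo
  refine ⟨hsum, ?_⟩
  have h1x : (0:ℝ) < 1 - x := by linarith
  calc (∑' n : ℕ, ((r ^ (2 * k * d ^ (M + n) + 2) : ℝ))⁻¹)
      ≤ ∑' n : ℕ, x ^ (n + 1) := Summable.tsum_le_tsum hterm hsum hgeo
    _ = x * (1 - x)⁻¹ := by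
        rw [hfun, tsum_mul_left, tsum_geometric_of_lt_one hx0 hx1]
    _ ≤ 1 := by
        have h5 : x * (1 - x)⁻¹ ≤ (1 - x) * (1 - x)⁻¹ :=
          mul_le_mul_of_nonneg_right (by linarith) (inv_nonneg.2 h1x.le)
        rw [mul_inv_cancel₀ h1x.ne'] at h5
        exact h5

private lemma full_summable (d k : ℕ) (hd : 2 ≤ d) (hk : 1 ≤ k) (r : ℝ) (hr : 1 < r) :
    Summable (fun n : ℕ => ((r ^ (2 * k * d ^ n + 2) : ℝ))⁻¹) := by
  have hr0 : (0:ℝ) < r := lt_trans one_pos hr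
  have hpp : ∀ m : ℕ, (0:ℝ) < r ^ m := fun m => pow_pos hr0 m
  refine Summable.of_nonneg_of_le (fun n => (inv_pos.2 (hpp _)).le) (fun n => ?_)
    (summable_geometric_of_lt_one (inv_nonneg.2 hr0.le) (inv_lt_one_of_one_lt₀ hr))
  have hnat : n ≤ 2 * k * d ^ n + 2 := by
    have h1 := natpow_bound d hd n
    nlinarith
  have hpow : r ^ n ≤ r ^ (2 * k * d ^ n + 2) := pow_le_pow_right₀ hr.le hnat
  calc ((r ^ (2 * k * d ^ n + 2) : ℝ))⁻¹ ≤ (r ^ n)⁻¹ := inv_anti₀ (hpp _) hpow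
    _ = (r⁻¹) ^ n := by rw [inv_pow]

private lemma sum_one_sub_le (d k : ℕ) (hd : 2 ≤ d) (r : ℝ) (hr1 : 1 < r) (hr2 : r < 2) :
    ∑ n ∈ Finset.range (⌊|Real.log (r - 1)| / Real.log d⌋₊ + 1),
      (1 - ((r ^ (2 * k * d ^ n + 2) : ℝ))⁻¹) ≤ (2 * k + 2) * d := by
  have hd1 : (1:ℝ) < (d:ℝ) := by exact_mod_cast (by omega : 1 < d)
  have hr0 : (0:ℝ) < r := lt_trans one_pos hr1
  have hs0 : 0 < r - 1 := sub_pos.2 hr1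
  have hlogd : 0 < Real.log d := Real.log_pos hd1
  set N := ⌊|Real.log (r - 1)| / Real.log d⌋₊ with hN
  have hlogr0 : 0 ≤ Real.log r := Real.log_nonneg hr1.le
  have hterm : ∀ n : ℕ, 1 - ((r ^ (2 * k * d ^ n + 2) : ℝ))⁻¹
      ≤ (2 * k * d ^ n + 2 : ℕ) * Real.log r := by
    intro n
    set e : ℕ := 2 * k * d ^ n + 2 with he
    have hpe : (0:ℝ) < r ^ e := pow_pos hr0 e
    have h1 : (r:ℝ) ^ e = Real.exp (e * Real.log r) := by
      rw [← Real.log_pow, Real.exp_log hpe]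
    have h2 : ((r:ℝ) ^ e)⁻¹ = Real.exp (-(e * Real.log r)) := by
      rw [h1, ← Real.exp_neg]
    have h3 := Real.add_one_le_exp (-((e:ℝ) * Real.log r))
    rw [h2]; linarith
  have hsum1 : ∑ n ∈ Finset.range (N + 1), (1 - ((r ^ (2 * k * d ^ n + 2) : ℝ))⁻¹)
      ≤ ∑ n ∈ Finset.range (N + 1), ((2 * k * d ^ n + 2 : ℕ) : ℝ) * Real.log r :=
    Finset.sum_le_sum fun n _ => hterm n
  have hnatsum : ∑ n ∈ Finset.range (N + 1), (2 * k * d ^ n + 2) ≤ (2 * k + 2) * d ^ (N + 1) := by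
    have h1 : ∑ n ∈ Finset.range (N + 1), (2 * k * d ^ n + 2)
        = 2 * k * (∑ n ∈ Finset.range (N + 1), d ^ n) + 2 * (N + 1) := by
      rw [Finset.sum_add_distrib, Finset.sum_const, Finset.card_range, ← Finset.mul_sum]
      ring
    have h2 := geomsum_le d hd (N + 1)
    have h3 : N + 1 + 1 ≤ d ^ (N + 1) := natpow_bound d hd (N + 1)
    nlinarith
  have hcast : (∑ n ∈ Finset.range (N + 1), ((2 * k * d ^ n + 2 : ℕ) : ℝ))
      ≤ (((2 * k + 2) * d ^ (N + 1) : ℕ) : ℝ) := by exact_mod_cast hnatsum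
  have hsum2 : ∑ n ∈ Finset.range (N + 1), ((2 * k * d ^ n + 2 : ℕ) : ℝ) * Real.log r
      ≤ (((2 * k + 2) * d ^ (N + 1) : ℕ) : ℝ) * Real.log r := by
    rw [← Finset.sum_mul]
    exact mul_le_mul_of_nonneg_right hcast hlogr0
  have hfl : (N : ℝ) ≤ |Real.log (r - 1)| / Real.log d :=
    Nat.floor_le (by positivity)
  have hlt1 : r - 1 < 1 := by linarith
  have habs : |Real.log (r - 1)| = Real.log ((r - 1)⁻¹) := by
    rw [Real.log_inv, abs_of_neg (Real.log_neg hs0 hlt1)]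
  have h4 : Real.log ((d:ℝ) ^ N) ≤ Real.log ((r - 1)⁻¹) := by
    rw [Real.log_pow]
    rw [habs] at hfl
    exact (le_div_iff₀ hlogd).1 hfl
  have h5 : (d:ℝ) ^ N ≤ (r - 1)⁻¹ := by
    have := Real.exp_le_exp.2 h4
    rwa [Real.exp_log (pow_pos (by linarith) _), Real.exp_log (inv_pos.2 hs0)] at this
  have hA : (d:ℝ) ^ N * (r - 1) ≤ 1 := by
    calc (d:ℝ) ^ N * (r - 1) ≤ (r - 1)⁻¹ * (r - 1) :=
          mul_le_mul_of_nonneg_right h5 hs0.le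
      _ = 1 := inv_mul_cancel₀ hs0.ne'
  have hlogsub : Real.log r ≤ r - 1 := Real.log_le_sub_one_of_pos hr0
  have hfinal : (((2 * k + 2) * d ^ (N + 1) : ℕ) : ℝ) * Real.log r ≤ (2 * k + 2) * d := by
    have hrw : (((2 * k + 2) * d ^ (N + 1) : ℕ) : ℝ)
        = (2 * (k:ℝ) + 2) * (d:ℝ) * (d:ℝ) ^ N := by
      push_cast [pow_succ]; ring
    rw [hrw]
    have hdN : (0:ℝ) < (d:ℝ) ^ N := pow_pos (by linarith) _
    have hkd : (0:ℝ) < (2 * (k:ℝ) + 2) * (d:ℝ) := by positivity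
    nlinarith [mul_le_mul_of_nonneg_left hA hkd.le,
      mul_le_mul_of_nonneg_left hlogsub (mul_pos hkd hdN).le]
  calc ∑ n ∈ Finset.range (N + 1), (1 - ((r ^ (2 * k * d ^ n + 2) : ℝ))⁻¹)
      ≤ _ := hsum1
    _ ≤ _ := hsum2
    _ ≤ (2 * k + 2) * d := by
        push_cast at hfinal ⊢
        convert hfinal using 2

private lemma Nfloor_tendsto (d : ℕ) (hd : 2 ≤ d) :
    Tendsto (fun r : ℝ => ((⌊|Real.log (r - 1)| / Real.log d⌋₊ + 1 : ℕ) : ℝ) / |Real.log (r - 1)|)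
      (nhdsWithin 1 (Set.Ioi 1)) (nhds (1 / Real.log d)) := by
  have hd1 : (1:ℝ) < (d:ℝ) := by exact_mod_cast (by omega : 1 < d)
  have hlogd : 0 < Real.log d := Real.log_pos hd1
  have hL := L_tendsto
  have hev : ∀ᶠ r : ℝ in nhdsWithin 1 (Set.Ioi 1), 1 ≤ |Real.log (r - 1)| :=
    hL.eventually_ge_atTop 1
  have hupper : Tendsto (fun r : ℝ => 1 / Real.log d + 1 / |Real.log (r - 1)|)
      (nhdsWithin 1 (Set.Ioi 1)) (nhds (1 / Real.log d)) := by
    have := (tendsto_const_nhds (x := (1:ℝ)) (f := nhdsWithin (1:ℝ) (Set.Ioi 1))).div_atTop hL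
    simpa using tendsto_const_nhds.add this
  apply tendsto_of_tendsto_of_tendsto_of_le_of_le' tendsto_const_nhds hupper
  · filter_upwards [hev] with r hr
    set L := |Real.log (r - 1)|
    have hL0 : (0:ℝ) < L := lt_of_lt_of_le one_pos hr
    rw [div_le_div_iff₀ hlogd hL0]
    have h1 : L / Real.log d < (⌊L / Real.log d⌋₊ + 1 : ℕ) := by
      push_cast; exact Nat.lt_floor_add_one _
    rw [div_lt_iff₀ hlogd] at h1
    linarith
  · filter_upwards [hev] with r hr
    set L := |Real.log (r - 1)|
    have hL0 : (0:ℝ) < L := lt_of_lt_of_le one_pos hr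
    rw [div_le_iff₀ hL0]
    have h1 : ((⌊L / Real.log d⌋₊ : ℕ) : ℝ) ≤ L / Real.log d :=
      Nat.floor_le (by positivity)
    have h2 : (1 / Real.log d + 1 / L) * L = L / Real.log d + 1 := by
      field_simp
    rw [h2]
    push_cast
    linarith
/-- With `N(r) = ⌊|log(r-1)|/log d⌋`, as `r → 1⁺`:
(a) `Σ_{n=0}^{N(r)} (1 - r^{-2kd^n-2}) = o(|log(r-1)|)`;
(b) the tail `Σ_{n>N(r)} r^{-2kd^n-2}` is uniformly bounded (and summable);
(c) `(1/|log(r-1)|) Σ_{n≥0} r^{-2kd^n-2} → 1/log d`. -/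
theorem stmt10 (d : ℕ) (hd : 2 ≤ d) (k : ℕ) (hk1 : 1 ≤ k) (hkd : k ≤ d) :
    Tendsto (fun r : ℝ =>
        (∑ n ∈ Finset.range (⌊|Real.log (r - 1)| / Real.log d⌋₊ + 1),
          (1 - r ^ (-(2 * (k : ℤ) * (d : ℤ) ^ n + 2)))) / |Real.log (r - 1)|)
      (nhdsWithin 1 (Set.Ioi 1)) (nhds 0) ∧
    (∃ C : ℝ, ∀ r : ℝ, 1 < r →
      (Summable fun n : ℕ =>
        r ^ (-(2 * (k : ℤ) * (d : ℤ) ^ (⌊|Real.log (r - 1)| / Real.log d⌋₊ + 1 + n) + 2))) ∧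
      (∑' n : ℕ,
        r ^ (-(2 * (k : ℤ) * (d : ℤ) ^ (⌊|Real.log (r - 1)| / Real.log d⌋₊ + 1 + n) + 2))) ≤ C) ∧
    Tendsto (fun r : ℝ =>
        (∑' n : ℕ, r ^ (-(2 * (k : ℤ) * (d : ℤ) ^ n + 2))) / |Real.log (r - 1)|)
      (nhdsWithin 1 (Set.Ioi 1)) (nhds (1 / Real.log d)) := by
  have hev1 : ∀ᶠ r : ℝ in nhdsWithin 1 (Set.Ioi 1), 1 ≤ |Real.log (r - 1)| :=
    L_tendsto.eventually_ge_atTop 1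
  have hIoo : ∀ᶠ r : ℝ in nhdsWithin 1 (Set.Ioi 1), r ∈ Set.Ioo (1:ℝ) 2 :=
    eventually_of_mem (Ioo_mem_nhdsGT_of_mem (by norm_num)) (fun r hr => hr)
  -- Part (a)
  have partA : Tendsto (fun r : ℝ =>
      (∑ n ∈ Finset.range (⌊|Real.log (r - 1)| / Real.log d⌋₊ + 1),
        (1 - r ^ (-(2 * (k : ℤ) * (d : ℤ) ^ n + 2)))) / |Real.log (r - 1)|)
      (nhdsWithin 1 (Set.Ioi 1)) (nhds 0) := by
    apply squeeze_zero' (g := fun r : ℝ => ((2 * k + 2) * d : ℝ) / |Real.log (r - 1)|)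
    · filter_upwards [hIoo] with r hr
      have hr1 : (1:ℝ) < r := hr.1
      have hpos : (0:ℝ) < r := lt_trans one_pos hr1
      apply div_nonneg _ (abs_nonneg _)
      apply Finset.sum_nonneg
      intro n _
      rw [aux_zpow r hpos k d n, sub_nonneg]
      exact inv_le_one_of_one_le₀ (one_le_pow₀ hr1.le)
    · filter_upwards [hIoo, hev1] with r hr hL1
      have hr1 : (1:ℝ) < r := hr.1
      have hpos : (0:ℝ) < r := lt_trans one_pos hr1
      have hL0 : (0:ℝ) < |Real.log (r - 1)| := lt_of_lt_of_le one_pos hL1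
      have e : (∑ n ∈ Finset.range (⌊|Real.log (r - 1)| / Real.log d⌋₊ + 1),
          (1 - r ^ (-(2 * (k : ℤ) * (d : ℤ) ^ n + 2))))
          = ∑ n ∈ Finset.range (⌊|Real.log (r - 1)| / Real.log d⌋₊ + 1),
          (1 - ((r ^ (2 * k * d ^ n + 2) : ℝ))⁻¹) :=
        Finset.sum_congr rfl fun n _ => by rw [aux_zpow r hpos k d n]
      rw [e]
      exact (div_le_div_iff_of_pos_right hL0).2 (sum_one_sub_le d k hd r hr1 hr.2)
    · exact tendsto_const_nhds.div_atTop L_tendsto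
  -- Part (b)
  have partB : ∀ r : ℝ, 1 < r →
      (Summable fun n : ℕ =>
        r ^ (-(2 * (k : ℤ) * (d : ℤ) ^ (⌊|Real.log (r - 1)| / Real.log d⌋₊ + 1 + n) + 2))) ∧
      (∑' n : ℕ,
        r ^ (-(2 * (k : ℤ) * (d : ℤ) ^ (⌊|Real.log (r - 1)| / Real.log d⌋₊ + 1 + n) + 2))) ≤ 1 := by
    intro r hr
    have hpos : (0:ℝ) < r := lt_trans one_pos hr
    obtain ⟨hs, hb⟩ := tail_bound d k hd hk1 r hr (⌊|Real.log (r - 1)| / Real.log d⌋₊ + 1)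
      (pow_two_le d r hr _ (key_ineq d hd r hr))
    have hfun : (fun n : ℕ =>
        r ^ (-(2 * (k : ℤ) * (d : ℤ) ^ (⌊|Real.log (r - 1)| / Real.log d⌋₊ + 1 + n) + 2)))
        = fun n : ℕ =>
          ((r ^ (2 * k * d ^ (⌊|Real.log (r - 1)| / Real.log d⌋₊ + 1 + n) + 2) : ℝ))⁻¹ :=
      funext fun n => aux_zpow r hpos k d _
    rw [hfun]
    exact ⟨hs, hb⟩
  -- Part (c)
  have partC : Tendsto (fun r : ℝ =>
      (∑' n : ℕ, r ^ (-(2 * (k : ℤ) * (d : ℤ) ^ n + 2))) / |Real.log (r - 1)|)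
      (nhdsWithin 1 (Set.Ioi 1)) (nhds (1 / Real.log d)) := by
    have t1 := Nfloor_tendsto d hd
    have t3 : Tendsto (fun r : ℝ =>
        (∑' n : ℕ, r ^ (-(2 * (k : ℤ) * (d : ℤ) ^
            (⌊|Real.log (r - 1)| / Real.log d⌋₊ + 1 + n) + 2))) / |Real.log (r - 1)|)
        (nhdsWithin 1 (Set.Ioi 1)) (nhds 0) := by
      apply squeeze_zero' (g := fun r : ℝ => 1 / |Real.log (r - 1)|)
      · filter_upwards [self_mem_nhdsWithin] with r hr
        have hr1 : (1:ℝ) < r := hr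
        have hpos : (0:ℝ) < r := lt_trans one_pos hr1
        apply div_nonneg _ (abs_nonneg _)
        exact tsum_nonneg fun n => (zpow_pos hpos _).le
      · filter_upwards [self_mem_nhdsWithin, hev1] with r hr hL1
        have hr1 : (1:ℝ) < r := hr
        have hL0 : (0:ℝ) < |Real.log (r - 1)| := lt_of_lt_of_le one_pos hL1
        exact (div_le_div_iff_of_pos_right hL0).2 (partB r hr1).2
      · exact tendsto_const_nhds.div_atTop L_tendsto
    have hmain := (t1.sub partA).add t3
    rw [sub_zero, add_zero] at hmain
    apply hmain.congr'
    filter_upwards [self_mem_nhdsWithin] with r hr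
    have hr1 : (1:ℝ) < r := hr
    have hpos : (0:ℝ) < r := lt_trans one_pos hr1
    set M := ⌊|Real.log (r - 1)| / Real.log d⌋₊ + 1 with hM
    have hsum := full_summable d k hd hk1 r hr1
    have e1 : (∑' n : ℕ, r ^ (-(2 * (k : ℤ) * (d : ℤ) ^ n + 2)))
        = ∑' n : ℕ, ((r ^ (2 * k * d ^ n + 2) : ℝ))⁻¹ :=
      tsum_congr fun n => aux_zpow r hpos k d n
    have e2 := (Summable.sum_add_tsum_nat_add M hsum).symm
    have e3 : (∑' n : ℕ, ((r ^ (2 * k * d ^ (n + M) + 2) : ℝ))⁻¹)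
        = ∑' n : ℕ, ((r ^ (2 * k * d ^ (M + n) + 2) : ℝ))⁻¹ :=
      tsum_congr fun n => by rw [Nat.add_comm n M]
    have e4 : ∑ n ∈ Finset.range M, ((r ^ (2 * k * d ^ n + 2) : ℝ))⁻¹
        = (M : ℝ) - ∑ n ∈ Finset.range M, (1 - ((r ^ (2 * k * d ^ n + 2) : ℝ))⁻¹) := by
      rw [Finset.sum_sub_distrib, Finset.sum_const, Finset.card_range, nsmul_eq_mul, mul_one]
      ring
    have e5 : ∑ n ∈ Finset.range M, (1 - r ^ (-(2 * (k : ℤ) * (d : ℤ) ^ n + 2)))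
        = ∑ n ∈ Finset.range M, (1 - ((r ^ (2 * k * d ^ n + 2) : ℝ))⁻¹) :=
      Finset.sum_congr rfl fun n _ => by rw [aux_zpow r hpos k d n]
    have e6 : (∑' n : ℕ, r ^ (-(2 * (k : ℤ) * (d : ℤ) ^ (M + n) + 2)))
        = ∑' n : ℕ, ((r ^ (2 * k * d ^ (M + n) + 2) : ℝ))⁻¹ :=
      tsum_congr fun n => aux_zpow r hpos k d _
    show ((M : ℕ) : ℝ) / |Real.log (r - 1)|
        - (∑ n ∈ Finset.range M, (1 - r ^ (-(2 * (k : ℤ) * (d : ℤ) ^ n + 2)))) / |Real.log (r - 1)|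
        + (∑' n : ℕ, r ^ (-(2 * (k : ℤ) * (d : ℤ) ^ (M + n) + 2))) / |Real.log (r - 1)|
        = (∑' n : ℕ, r ^ (-(2 * (k : ℤ) * (d : ℤ) ^ n + 2))) / |Real.log (r - 1)|
    rw [e1, e2, e3, e4, e5, e6]
    ring
  exact ⟨partA, ⟨1, partB⟩, partC⟩
end

section
/- Let d ≥ 2 and c ∈ ℂ. For z ∈ S¹ and |w| > 1, the function v_z(w) = -(w/d) Σ_{n=0}^{∞} c · d^{-n} w^{-d·d^n} (the case c_d ≡ c constant and c_1 = … = c_{d-1} = 0 in the general series) satisfies v_{z^d}(w^d) = d w^{d-1} v_z(w) + c. Equivalently, u(w) = v_z(w) is a solution, holomorphic on {|w| > 1} and vanishing at infinity, of u(w^d) = d w^{d-1} u(w) + c. -/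
open Filter

private lemma uS_term_norm (d : ℕ) (hd : 2 ≤ d) (c w : ℂ) (hw : 1 ≤ ‖w‖) (n : ℕ) :
    ‖c * ((d : ℂ)⁻¹) ^ n * w ^ (-((d ^ (n + 1) : ℕ) : ℤ))‖ ≤ ‖c‖ * ((d : ℝ)⁻¹) ^ n := by
  have h1 : ‖w ^ (-((d ^ (n + 1) : ℕ) : ℤ))‖ ≤ 1 := by
    rw [norm_zpow, zpow_neg, zpow_natCast]
    exact inv_le_one_of_one_le₀ (one_le_pow₀ hw)
  calc ‖c * ((d : ℂ)⁻¹) ^ n * w ^ (-((d ^ (n + 1) : ℕ) : ℤ))‖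
      = (‖c‖ * ((d : ℝ)⁻¹) ^ n) * ‖w ^ (-((d ^ (n + 1) : ℕ) : ℤ))‖ := by
        rw [norm_mul, norm_mul, norm_pow, norm_inv, Complex.norm_natCast]
    _ ≤ (‖c‖ * ((d : ℝ)⁻¹) ^ n) * 1 := mul_le_mul_of_nonneg_left h1 (by positivity)
    _ = ‖c‖ * ((d : ℝ)⁻¹) ^ n := mul_one _

private lemma uS_geom_summable (d : ℕ) (hd : 2 ≤ d) (c : ℂ) :
    Summable (fun n : ℕ => ‖c‖ * ((d : ℝ)⁻¹) ^ n) := by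
  apply Summable.mul_left
  apply summable_geometric_of_lt_one (by positivity)
  rw [inv_lt_one_iff₀]
  right
  exact_mod_cast lt_of_lt_of_le one_lt_two hd

/-- The solution `u(w) = -(w/d) Σ_{n≥0} c d^{-n} w^{-d^{n+1}}` of the functional equation
`u(w^d) = d w^{d-1} u(w) + c`. -/
noncomputable def uS (d : ℕ) (c : ℂ) (w : ℂ) : ℂ :=
  -(w / d) * ∑' n : ℕ, c * ((d : ℂ)⁻¹) ^ n * w ^ (-((d ^ (n + 1) : ℕ) : ℤ))

private lemma uS_summable (d : ℕ) (hd : 2 ≤ d) (c w : ℂ) (hw : 1 ≤ ‖w‖) :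
    Summable (fun n : ℕ => c * ((d : ℂ)⁻¹) ^ n * w ^ (-((d ^ (n + 1) : ℕ) : ℤ))) := by
  apply Summable.of_norm_bounded (uS_geom_summable d hd c)
  exact uS_term_norm d hd c w hw

/-- For `d ≥ 2` and `c ∈ ℂ`, the function `u = uS d c` satisfies
`u(w^d) = d w^{d-1} u(w) + c` on `{|w| > 1}`, is holomorphic there,
and vanishes at infinity. -/
theorem stmt17 (d : ℕ) (hd : 2 ≤ d) (c : ℂ) :
    (∀ w : ℂ, 1 < ‖w‖ →
      uS d c (w ^ d) = d * w ^ (d - 1) * uS d c w + c) ∧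
    DifferentiableOn ℂ (uS d c) {w : ℂ | 1 < ‖w‖} ∧
    Tendsto (uS d c) (Bornology.cobounded ℂ) (nhds 0) := by
  refine ⟨?_, ?_, ?_⟩
  · -- functional equation
    intro w hw
    have hw0 : w ≠ 0 := by
      intro h; rw [h] at hw; simp at hw; linarith
    have hd0 : (d : ℂ) ≠ 0 := Nat.cast_ne_zero.2 (by omega)
    have hwd : w ^ d ≠ 0 := pow_ne_zero _ hw0
    have hs := uS_summable d hd c w hw.le
    rw [uS, uS, Summable.tsum_eq_zero_add hs]
    have hpow : ∀ n : ℕ, (w ^ d) ^ (-((d ^ (n + 1) : ℕ) : ℤ)) = w ^ (-((d ^ (n + 2) : ℕ) : ℤ)) := by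
      intro n
      rw [zpow_neg, zpow_neg, zpow_natCast, zpow_natCast, ← pow_mul, ← pow_succ']
    have hLHS : -(w ^ d / (d:ℂ)) *
          ∑' n : ℕ, c * ((d : ℂ)⁻¹) ^ n * (w ^ d) ^ (-((d ^ (n + 1) : ℕ) : ℤ))
        = -(w ^ d) * ∑' n : ℕ, c * ((d : ℂ)⁻¹) ^ (n + 1) * w ^ (-((d ^ (n + 1 + 1) : ℕ) : ℤ)) := by
      rw [← tsum_mul_left, ← tsum_mul_left]
      apply tsum_congr
      intro n
      rw [hpow n, pow_succ']
      field_simp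
      linear_combination (c * (1 / (d:ℂ)) ^ n) * mul_inv_cancel₀ hd0
    rw [hLHS]
    have hpw : w ^ (d - 1) * w = w ^ d := by
      rw [← pow_succ]; congr 1; omega
    have hww : (d:ℂ) * w ^ (d - 1) * (-(w / d)) = -(w ^ d) := by
      field_simp
      linear_combination -hpw
    have hstep : ∀ x : ℂ, (d:ℂ) * w ^ (d - 1) * (-(w / d) * x) = -(w ^ d) * x := fun x => by
      rw [← mul_assoc, hww]
    rw [hstep]
    have h0 : c * ((d:ℂ)⁻¹) ^ 0 * w ^ (-((d ^ (0 + 1) : ℕ) : ℤ)) = c * (w ^ d)⁻¹ := by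
      simp [zpow_neg]
    rw [h0]
    have hcan : -(w ^ d) * (c * (w ^ d)⁻¹) = -c := by
      field_simp
    linear_combination -hcan
  · -- differentiability
    have hopen : IsOpen {w : ℂ | 1 < ‖w‖} :=
      isOpen_lt continuous_const continuous_norm
    have hF : DifferentiableOn ℂ
        (fun w : ℂ => ∑' n : ℕ, c * ((d : ℂ)⁻¹) ^ n * w ^ (-((d ^ (n + 1) : ℕ) : ℤ)))
        {w : ℂ | 1 < ‖w‖} := by
      apply Complex.differentiableOn_tsum_of_summable_norm (uS_geom_summable d hd c) _ hopen
        (fun n w hw => uS_term_norm d hd c w (le_of_lt hw) n)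
      intro n w hw
      have hw0 : w ≠ 0 := by
        intro h; rw [h] at hw; simp at hw; linarith
      exact (((differentiableAt_zpow.2 (Or.inl hw0)).const_mul _)).differentiableWithinAt
    have hm : DifferentiableOn ℂ (fun w : ℂ => -(w / (d:ℂ))) {w : ℂ | 1 < ‖w‖} :=
      ((differentiable_id.div_const _).neg).differentiableOn
    exact hm.mul hF
  · -- vanishing at infinity
    set K : ℝ := ∑' n : ℕ, ‖c‖ * ((d : ℝ)⁻¹) ^ n with hK
    have hbound : ∀ w : ℂ, 1 ≤ ‖w‖ → ‖uS d c w‖ ≤ K / d * ‖w‖⁻¹ := by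
      intro w hw
      have hw0 : (0:ℝ) < ‖w‖ := lt_of_lt_of_le one_pos hw
      have hsn : Summable (fun n : ℕ => ‖c * ((d : ℂ)⁻¹) ^ n * w ^ (-((d ^ (n + 1) : ℕ) : ℤ))‖) :=
        Summable.of_nonneg_of_le (fun n => norm_nonneg _) (uS_term_norm d hd c w hw)
          (uS_geom_summable d hd c)
      have h2 : ∀ n : ℕ, ‖c * ((d : ℂ)⁻¹) ^ n * w ^ (-((d ^ (n + 1) : ℕ) : ℤ))‖
          ≤ (‖c‖ * ((d : ℝ)⁻¹) ^ n) * (‖w‖ ^ 2)⁻¹ := by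
        intro n
        have hz : ‖w ^ (-((d ^ (n + 1) : ℕ) : ℤ))‖ ≤ (‖w‖ ^ 2)⁻¹ := by
          rw [norm_zpow, zpow_neg, zpow_natCast]
          apply inv_anti₀ (by positivity)
          calc ‖w‖ ^ 2 ≤ ‖w‖ ^ (d ^ (n+1)) := pow_le_pow_right₀ hw (by
                calc 2 ≤ d := hd
                  _ = d ^ 1 := (pow_one d).symm
                  _ ≤ d ^ (n+1) := Nat.pow_le_pow_right (by omega) (by omega))
            _ = ‖w‖ ^ (d ^ (n+1)) := rfl
        calc ‖c * ((d : ℂ)⁻¹) ^ n * w ^ (-((d ^ (n + 1) : ℕ) : ℤ))‖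
            = (‖c‖ * ((d : ℝ)⁻¹) ^ n) * ‖w ^ (-((d ^ (n + 1) : ℕ) : ℤ))‖ := by
              rw [norm_mul, norm_mul, norm_pow, norm_inv, Complex.norm_natCast]
          _ ≤ (‖c‖ * ((d : ℝ)⁻¹) ^ n) * (‖w‖ ^ 2)⁻¹ :=
              mul_le_mul_of_nonneg_left hz (by positivity)
      have hts : ‖∑' n : ℕ, c * ((d : ℂ)⁻¹) ^ n * w ^ (-((d ^ (n + 1) : ℕ) : ℤ))‖
          ≤ K * (‖w‖ ^ 2)⁻¹ := by
        calc ‖∑' n : ℕ, c * ((d : ℂ)⁻¹) ^ n * w ^ (-((d ^ (n + 1) : ℕ) : ℤ))‖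
            ≤ ∑' n : ℕ, ‖c * ((d : ℂ)⁻¹) ^ n * w ^ (-((d ^ (n + 1) : ℕ) : ℤ))‖ :=
              norm_tsum_le_tsum_norm hsn
          _ ≤ ∑' n : ℕ, (‖c‖ * ((d : ℝ)⁻¹) ^ n) * (‖w‖ ^ 2)⁻¹ :=
              Summable.tsum_le_tsum h2 hsn ((uS_geom_summable d hd c).mul_right _)
          _ = K * (‖w‖ ^ 2)⁻¹ := by rw [tsum_mul_right]
      rw [uS, norm_mul]
      have hn1 : ‖-(w / (d:ℂ))‖ = ‖w‖ / d := by
        rw [norm_neg, norm_div, Complex.norm_natCast]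
      rw [hn1]
      calc ‖w‖ / d * ‖∑' n : ℕ, c * ((d : ℂ)⁻¹) ^ n * w ^ (-((d ^ (n + 1) : ℕ) : ℤ))‖
          ≤ ‖w‖ / d * (K * (‖w‖ ^ 2)⁻¹) :=
            mul_le_mul_of_nonneg_left hts (by positivity)
        _ = K / d * ‖w‖⁻¹ := by
            have hd' : (d:ℝ) ≠ 0 := by positivity
            have harith : ∀ a : ℝ, a ≠ 0 → a / d * (K * (a ^ 2)⁻¹) = K / d * a⁻¹ := by
              intro a ha
              field_simp
            exact harith ‖w‖ (ne_of_gt hw0)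
    rw [tendsto_zero_iff_norm_tendsto_zero]
    have hnorm : Tendsto (fun w : ℂ => ‖w‖) (Bornology.cobounded ℂ) atTop :=
      tendsto_norm_cobounded_atTop
    have hlim : Tendsto (fun w : ℂ => K / d * ‖w‖⁻¹) (Bornology.cobounded ℂ) (nhds 0) := by
      have := hnorm.inv_tendsto_atTop
      simpa using this.const_mul (K / d)
    apply squeeze_zero' (Eventually.of_forall fun w => norm_nonneg _) _ hlim
    filter_upwards [hnorm.eventually_ge_atTop 1] with w hw
    exact hbound w hw
end
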